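/- arXiv:1909.07062 — 3 statements merged into one kernel-verified Lean document; each statement's English description precedes it below -/
import Mathlib

section
/- The Leech lattice contains no vectors of norm 2, i.e. for every nonzero x in the Leech lattice, (x,x) ≥ 4. -/
/-- The generator matrix `[I₁₂ | A]` of the binary Golay code. -/
def golayGenMatrix : Matrix (Fin 12) (Fin 24) (ZMod 2) :=
  !![1, 0, 0, 0, 0, 0, 0, 0, 0, 0, 0, 0, 0, 0, 1, 1, 0, 0, 1, 1, 1, 1, 0, 1;
    0, 1, 0, 0, 0, 0, 0, 0, 0, 0, 0, 0, 1, 0, 0, 1, 1, 0, 0, 1, 1, 1, 1, 0;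
    0, 0, 1, 0, 0, 0, 0, 0, 0, 0, 0, 0, 1, 1, 0, 0, 1, 1, 0, 0, 0, 1, 1, 1;
    0, 0, 0, 1, 0, 0, 0, 0, 0, 0, 0, 0, 0, 1, 1, 0, 0, 1, 1, 0, 1, 0, 1, 1;
    0, 0, 0, 0, 1, 0, 0, 0, 0, 0, 0, 0, 0, 1, 1, 1, 1, 0, 0, 1, 0, 0, 1, 1;
    0, 0, 0, 0, 0, 1, 0, 0, 0, 0, 0, 0, 1, 0, 1, 1, 1, 1, 0, 0, 1, 0, 0, 1;
    0, 0, 0, 0, 0, 0, 1, 0, 0, 0, 0, 0, 1, 1, 0, 1, 0, 1, 1, 0, 1, 1, 0, 0;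
    0, 0, 0, 0, 0, 0, 0, 1, 0, 0, 0, 0, 1, 1, 1, 0, 0, 0, 1, 1, 0, 1, 1, 0;
    0, 0, 0, 0, 0, 0, 0, 0, 1, 0, 0, 0, 1, 0, 0, 1, 0, 1, 1, 1, 0, 0, 1, 1;
    0, 0, 0, 0, 0, 0, 0, 0, 0, 1, 0, 0, 1, 1, 0, 0, 1, 0, 1, 1, 1, 0, 0, 1;
    0, 0, 0, 0, 0, 0, 0, 0, 0, 0, 1, 0, 0, 1, 1, 0, 1, 1, 0, 1, 1, 1, 0, 0;
    0, 0, 0, 0, 0, 0, 0, 0, 0, 0, 0, 1, 0, 0, 1, 1, 1, 1, 1, 0, 0, 1, 1, 0]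

/-- The binary Golay code: the span of the rows of the generator matrix. -/
def golayCode : Submodule (ZMod 2) (Fin 24 → ZMod 2) :=
  Submodule.span (ZMod 2) (Set.range fun i : Fin 12 => golayGenMatrix i)

/-- The Leech lattice, as a subset of `ℝ²⁴` with scalar product
`(x,y) = (1/8)∑ xᵢyᵢ`: vectors `2c + 4x` with `∑xᵢ` even and `1 + 2c + 4y` with
`∑yᵢ` odd, where `c` runs over the Golay code. -/
def leechLattice : Set (Fin 24 → ℝ) :=
  {w | ∃ c ∈ golayCode, ∃ x : Fin 24 → ℤ,
    ((∑ i, x i) % 2 = 0 ∧ w = fun i => 2 * ((c i).val : ℝ) + 4 * (x i : ℝ)) ∨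
    ((∑ i, x i) % 2 = 1 ∧ w = fun i => 1 + 2 * ((c i).val : ℝ) + 4 * (x i : ℝ))}

/-! ### Nat-bitmask computations for the Golay code -/

def cwZ (a0 a1 a2 a3 a4 a5 a6 a7 a8 a9 a10 a11 : ZMod 2) : ℕ :=
  (if a0 = 1 then 12369921 else 0) ^^^ ((if a1 = 1 then 7966722 else 0) ^^^
  ((if a2 = 1 then 14888964 else 0) ^^^ ((if a3 = 1 then 14049288 else 0) ^^^
  ((if a4 = 1 then 13230096 else 0) ^^^ ((if a5 = 1 then 9687072 else 0) ^^^
  ((if a6 = 1 then 3584064 else 0) ^^^ ((if a7 = 1 then 7106688 else 0) ^^^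
  ((if a8 = 1 then 13537536 else 0) ^^^ ((if a9 = 1 then 10301952 else 0) ^^^
  ((if a10 = 1 then 3892224 else 0) ^^^ (if a11 = 1 then 6801408 else 0)))))))))))

def wtN (v : ℕ) : ℕ :=
  (if v.testBit 0 then 1 else 0) + ((if v.testBit 1 then 1 else 0) +
  ((if v.testBit 2 then 1 else 0) + ((if v.testBit 3 then 1 else 0) +
  ((if v.testBit 4 then 1 else 0) + ((if v.testBit 5 then 1 else 0) +
  ((if v.testBit 6 then 1 else 0) + ((if v.testBit 7 then 1 else 0) +
  ((if v.testBit 8 then 1 else 0) + ((if v.testBit 9 then 1 else 0) +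
  ((if v.testBit 10 then 1 else 0) + ((if v.testBit 11 then 1 else 0) +
  ((if v.testBit 12 then 1 else 0) + ((if v.testBit 13 then 1 else 0) +
  ((if v.testBit 14 then 1 else 0) + ((if v.testBit 15 then 1 else 0) +
  ((if v.testBit 16 then 1 else 0) + ((if v.testBit 17 then 1 else 0) +
  ((if v.testBit 18 then 1 else 0) + ((if v.testBit 19 then 1 else 0) +
  ((if v.testBit 20 then 1 else 0) + ((if v.testBit 21 then 1 else 0) +
  ((if v.testBit 22 then 1 else 0) + (if v.testBit 23 then 1 else 0)))))))))))))))))))))))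

set_option maxRecDepth 10000 in
set_option maxHeartbeats 10000000 in
theorem cw_check : ∀ a0 a1 a2 a3 a4 a5 a6 a7 a8 a9 a10 a11 : ZMod 2,
    wtN (cwZ a0 a1 a2 a3 a4 a5 a6 a7 a8 a9 a10 a11) % 2 = 0 ∧
    (wtN (cwZ a0 a1 a2 a3 a4 a5 a6 a7 a8 a9 a10 a11) = 0 ∨
      8 ≤ wtN (cwZ a0 a1 a2 a3 a4 a5 a6 a7 a8 a9 a10 a11)) := by decide

/-! ### The bridge between bitmasks and `ZMod 2` vectors -/

def phiN (v : ℕ) : Fin 24 → ZMod 2 := fun j => if v.testBit j.val then 1 else 0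

theorem zmod2_cases (z : ZMod 2) : z = 0 ∨ z = 1 := by revert z; decide

theorem phi_xor (a b : ℕ) : phiN (a ^^^ b) = phiN a + phiN b := by
  funext j
  simp only [phiN, Nat.testBit_xor, Pi.add_apply]
  cases h1 : a.testBit j.val <;> cases h2 : b.testBit j.val <;> simp [h1, h2] <;> decide

theorem phi_ite (a : ZMod 2) (r : ℕ) :
    phiN (if a = 1 then r else 0) = a • phiN r := by
  rcases zmod2_cases a with h | h <;> subst h
  · rw [if_neg (by decide), zero_smul]
    funext j
    simp [phiN, Nat.zero_testBit]
  · rw [if_pos rfl, one_smul]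

theorem phi_row0 : phiN 12369921 = golayGenMatrix 0 := by decide
theorem phi_row1 : phiN 7966722 = golayGenMatrix 1 := by decide
theorem phi_row2 : phiN 14888964 = golayGenMatrix 2 := by decide
theorem phi_row3 : phiN 14049288 = golayGenMatrix 3 := by decide
theorem phi_row4 : phiN 13230096 = golayGenMatrix 4 := by decide
theorem phi_row5 : phiN 9687072 = golayGenMatrix 5 := by decide
theorem phi_row6 : phiN 3584064 = golayGenMatrix 6 := by decide
theorem phi_row7 : phiN 7106688 = golayGenMatrix 7 := by decide
theorem phi_row8 : phiN 13537536 = golayGenMatrix 8 := by decide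
theorem phi_row9 : phiN 10301952 = golayGenMatrix 9 := by decide
theorem phi_row10 : phiN 3892224 = golayGenMatrix 10 := by decide
theorem phi_row11 : phiN 6801408 = golayGenMatrix 11 := by decide

open Fin.NatCast in
theorem sum_twelve_expand (m : Fin 12 → ZMod 2) (G : Fin 12 → Fin 24 → ZMod 2) :
    (∑ i, m i • G i) = m 0 • G 0 + (m 1 • G 1 + (m 2 • G 2 + (m 3 • G 3 +
      (m 4 • G 4 + (m 5 • G 5 + (m 6 • G 6 + (m 7 • G 7 + (m 8 • G 8 +
      (m 9 • G 9 + (m 10 • G 10 + m 11 • G 11)))))))))) := by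
  have h1 : (∑ i, m i • G i) = ∑ i : Fin 12, (fun k : ℕ => m k • G k) i.val := by
    apply Finset.sum_congr rfl
    intro i _
    simp [Fin.cast_val_eq_self]
  rw [h1, Fin.sum_univ_eq_sum_range (fun k => m k • G k) 12]
  simp [Finset.sum_range_succ]
  abel

theorem phi_cwZ (m : Fin 12 → ZMod 2) :
    phiN (cwZ (m 0) (m 1) (m 2) (m 3) (m 4) (m 5) (m 6) (m 7) (m 8) (m 9)
      (m 10) (m 11)) = ∑ i, m i • golayGenMatrix i := by
  rw [sum_twelve_expand m golayGenMatrix]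
  unfold cwZ
  simp only [phi_xor, phi_ite, phi_row0, phi_row1, phi_row2, phi_row3, phi_row4,
    phi_row5, phi_row6, phi_row7, phi_row8, phi_row9, phi_row10, phi_row11]

theorem card_filter_phi (v : ℕ) :
    (Finset.univ.filter fun j : Fin 24 => phiN v j = 1).card = wtN v := by
  rw [Finset.card_filter]
  have h1 : ∀ j : Fin 24, (if phiN v j = 1 then (1:ℕ) else 0) =
      (fun k : ℕ => if v.testBit k then (1:ℕ) else 0) j.val := by
    intro j
    simp only [phiN]
    by_cases h : v.testBit j.val = true <;>
      simp [h, (by decide : (0 : ZMod 2) ≠ 1)]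
  calc (∑ j : Fin 24, if phiN v j = 1 then (1:ℕ) else 0)
      = ∑ j : Fin 24, (fun k : ℕ => if v.testBit k then (1:ℕ) else 0) j.val :=
        Finset.sum_congr rfl fun j _ => h1 j
    _ = ∑ k ∈ Finset.range 24, (if v.testBit k then (1:ℕ) else 0) := by
        rw [← Fin.sum_univ_eq_sum_range (fun k => if v.testBit k then (1:ℕ) else 0) 24]
    _ = wtN v := by
        simp only [Finset.sum_range_succ, Finset.sum_range_zero]
        unfold wtN
        ring

/-! ### The two key facts about the Golay code -/

theorem golay_facts (c : Fin 24 → ZMod 2) (hc : c ∈ golayCode) :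
    (Finset.univ.filter fun j => c j = 1).card % 2 = 0 ∧
    (c = 0 ∨ 8 ≤ (Finset.univ.filter fun j => c j = 1).card) := by
  obtain ⟨m, hm⟩ := (Submodule.mem_span_range_iff_exists_fun (ZMod 2)).mp hc
  have hphi : c = phiN (cwZ (m 0) (m 1) (m 2) (m 3) (m 4) (m 5) (m 6) (m 7)
      (m 8) (m 9) (m 10) (m 11)) := by rw [phi_cwZ, hm]
  set v := cwZ (m 0) (m 1) (m 2) (m 3) (m 4) (m 5) (m 6) (m 7) (m 8) (m 9)
      (m 10) (m 11) with hv
  have hcard : (Finset.univ.filter fun j => c j = 1).card = wtN v := by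
    rw [hphi]; exact card_filter_phi v
  obtain ⟨h1, h2⟩ := cw_check (m 0) (m 1) (m 2) (m 3) (m 4) (m 5) (m 6) (m 7)
      (m 8) (m 9) (m 10) (m 11)
  rw [← hv] at h1 h2
  refine ⟨by rw [hcard]; exact h1, ?_⟩
  rcases h2 with h2 | h2
  · left
    rw [← hcard] at h2
    have hfe : (Finset.univ.filter fun j => c j = 1) = ∅ := Finset.card_eq_zero.mp h2
    funext j
    rcases zmod2_cases (c j) with h | h
    · exact h
    · exfalso
      have : j ∈ Finset.univ.filter fun j => c j = 1 := by
        simp [h]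
      rw [hfe] at this
      exact absurd this (Finset.notMem_empty j)
  · right; rw [hcard]; exact h2

/-! ### Integer helper lemmas -/

theorem int_one_le_sq {t : ℤ} (ht : t ≠ 0) : 1 ≤ t * t := by
  have := mul_self_pos.mpr ht
  omega

theorem sum_sq_ge_two (x : Fin 24 → ℤ) (j : Fin 24) (hj : x j ≠ 0)
    (hpar : (∑ i, x i) % 2 = 0) : 2 ≤ ∑ i, x i * x i := by
  by_contra h
  push_neg at h
  have h1 : 1 ≤ x j * x j := int_one_le_sq hj
  have hsplit : x j * x j + ∑ i ∈ Finset.univ.erase j, x i * x i = ∑ i, x i * x i :=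
    Finset.add_sum_erase Finset.univ (fun i => x i * x i) (Finset.mem_univ j)
  have hnn : 0 ≤ ∑ i ∈ Finset.univ.erase j, x i * x i :=
    Finset.sum_nonneg fun i _ => mul_self_nonneg _
  have herase0 : ∑ i ∈ Finset.univ.erase j, x i * x i = 0 := by linarith
  have hzero : ∀ i ∈ Finset.univ.erase j, x i = 0 := by
    intro i hi
    have := (Finset.sum_eq_zero_iff_of_nonneg fun i _ => mul_self_nonneg (x i)).mp
      herase0 i hi
    exact mul_self_eq_zero.mp this
  have hsum : ∑ i, x i = x j := by
    rw [← Finset.add_sum_erase _ _ (Finset.mem_univ j), Finset.sum_eq_zero hzero,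
      add_zero]
  have hxj : x j * x j = 1 := by linarith
  have hf : (x j - 1) * (x j + 1) = 0 := by nlinarith
  rcases mul_eq_zero.mp hf with hf | hf
  · have : x j = 1 := by linarith
    rw [hsum, this] at hpar
    omega
  · have : x j = -1 := by linarith
    rw [hsum, this] at hpar
    omega

/-! ### The main theorem -/

/-- The Leech lattice contains no vectors of norm 2: every nonzero vector has
norm `(x,x) = (1/8)*sum x_i^2` at least `4`. -/
theorem stmt8 (w : Fin 24 → ℝ) (hw : w ∈ leechLattice) (hw0 : w ≠ 0) :
    4 ≤ (1 / 8) * ∑ i, w i * w i := by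
  obtain ⟨c, hc, x, hcase⟩ := hw
  obtain ⟨hWeven, hWmin⟩ := golay_facts c hc
  set W := (Finset.univ.filter fun j => c j = 1).card with hWdef
  clear_value W
  suffices hsum : (32 : ℝ) ≤ ∑ i, w i * w i by linarith
  rcases hcase with ⟨hpar, hw'⟩ | ⟨hpar, hw'⟩
  · -- even case : w = 2c + 4x
    subst hw'
    by_cases hc0 : c = 0
    · -- c = 0 : w = 4x
      subst hc0
      have hval : ∀ i : Fin 24, (((0 : Fin 24 → ZMod 2) i).val : ℝ) = 0 := by
        intro i; simp
      obtain ⟨j, hj⟩ := Function.ne_iff.mp hw0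
      have hxj : x j ≠ 0 := by
        intro h0
        apply hj
        simp [hval j, h0]
      have hsum2 : (2 : ℤ) ≤ ∑ i, x i * x i := sum_sq_ge_two x j hxj hpar
      have hcast : ∑ i, (2 * (((0 : Fin 24 → ZMod 2) i).val : ℝ) + 4 * (x i : ℝ)) *
          (2 * (((0 : Fin 24 → ZMod 2) i).val : ℝ) + 4 * (x i : ℝ)) =
          16 * ((∑ i, x i * x i : ℤ) : ℝ) := by
        push_cast
        rw [Finset.mul_sum]
        apply Finset.sum_congr rfl
        intro i _
        rw [hval i]
        ring
      rw [hcast]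
      have : (2 : ℝ) ≤ ((∑ i, x i * x i : ℤ) : ℝ) := by exact_mod_cast hsum2
      linarith
    · -- c ≠ 0 : weight ≥ 8
      have hW8 : 8 ≤ W := by tauto
      set f : Fin 24 → ℝ := fun i =>
        (2 * ((c i).val : ℝ) + 4 * (x i : ℝ)) * (2 * ((c i).val : ℝ) + 4 * (x i : ℝ))
        with hf
      have hterm : ∀ i ∈ Finset.univ.filter fun j => c j = 1, (4 : ℝ) ≤ f i := by
        intro i hi
        have hci : c i = 1 := (Finset.mem_filter.mp hi).2
        have hval : (((c i).val : ℝ)) = 1 := by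
          have : (c i).val = 1 := by rw [hci]; rfl
          rw [this]; norm_num
        have ht : (0 : ℤ) ≤ x i * (x i + 1) := by
          have h1 : 1 ≤ (2 * x i + 1) * (2 * x i + 1) := int_one_le_sq (by omega)
          nlinarith
        have htr : (0 : ℝ) ≤ (x i : ℝ) * ((x i : ℝ) + 1) := by exact_mod_cast ht
        rw [hf]
        simp only [hval]
        nlinarith
      calc (32 : ℝ) ≤ 4 * (W : ℝ) := by
            have : (8 : ℝ) ≤ (W : ℝ) := by exact_mod_cast hW8
            linarith
        _ = ∑ i ∈ Finset.univ.filter fun j => c j = 1, (4 : ℝ) := by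
            rw [Finset.sum_const, nsmul_eq_mul, hWdef]
            ring
        _ ≤ ∑ i ∈ Finset.univ.filter fun j => c j = 1, f i :=
            Finset.sum_le_sum hterm
        _ ≤ ∑ i, f i :=
            Finset.sum_le_sum_of_subset_of_nonneg (Finset.subset_univ _)
              (fun i _ _ => mul_self_nonneg _)
  · -- odd case : w = 1 + 2c + 4x
    subst hw'
    set v : Fin 24 → ℤ := fun i => 1 + 2 * ((c i).val : ℤ) + 4 * x i with hv
    have hcast : ∑ i, (1 + 2 * (((c i)).val : ℝ) + 4 * (x i : ℝ)) *
        (1 + 2 * (((c i)).val : ℝ) + 4 * (x i : ℝ)) = ((∑ i, v i * v i : ℤ) : ℝ) := by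
      push_cast
      apply Finset.sum_congr rfl
      intro i _
      rw [hv]
      push_cast
      ring
    rw [hcast]
    suffices h32 : (32 : ℤ) ≤ ∑ i, v i * v i by exact_mod_cast h32
    have hv1 : ∀ i, 1 ≤ v i * v i := by
      intro i
      apply int_one_le_sq
      have hvi : v i = 1 + 2 * ((c i).val : ℤ) + 4 * x i := by rw [hv]
      omega
    by_cases hbig : ∃ j, 9 ≤ v j * v j
    · obtain ⟨j, hj⟩ := hbig
      have hsplit : v j * v j + ∑ i ∈ Finset.univ.erase j, v i * v i = ∑ i, v i * v i :=
        Finset.add_sum_erase Finset.univ (fun i => v i * v i) (Finset.mem_univ j)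
      have hcard : (Finset.univ.erase j).card = 23 := by
        rw [Finset.card_erase_of_mem (Finset.mem_univ j)]
        simp
      have h23 : (23 : ℤ) ≤ ∑ i ∈ Finset.univ.erase j, v i * v i := by
        have := Finset.card_nsmul_le_sum (Finset.univ.erase j) (fun i => v i * v i) 1
          (fun i _ => hv1 i)
        rw [hcard] at this
        simpa using this
      linarith
    · push_neg at hbig
      have hx : ∀ i, x i = if c i = 1 then -1 else 0 := by
        intro i
        have h9 := hbig i
        have h3 : -3 < v i ∧ v i < 3 := by
          constructor <;> nlinarith
        have hvi : v i = 1 + 2 * ((c i).val : ℤ) + 4 * x i := by rw [hv]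
        rcases zmod2_cases (c i) with h | h
        · rw [if_neg (by rw [h]; decide)]
          rw [h] at hvi
          have hz : ((0 : ZMod 2).val : ℤ) = 0 := by decide
          rw [hz] at hvi
          omega
        · rw [if_pos h]
          rw [h] at hvi
          have hz : ((1 : ZMod 2).val : ℤ) = 1 := by decide
          rw [hz] at hvi
          omega
      have hxsum : ∑ i, x i = -(W : ℤ) := by
        calc ∑ i, x i = ∑ i, (if c i = 1 then (-1 : ℤ) else 0) :=
              Finset.sum_congr rfl fun i _ => hx i
          _ = ∑ i, -(if c i = 1 then (1 : ℤ) else 0) := by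
              apply Finset.sum_congr rfl
              intro i _
              by_cases h : c i = 1 <;> simp [h]
          _ = -∑ i, (if c i = 1 then (1 : ℤ) else 0) := by
              rw [Finset.sum_neg_distrib]
          _ = -(W : ℤ) := by
              rw [Finset.sum_boole, hWdef]
      rw [hxsum] at hpar
      omega
end

section
/- The Leech lattice Λ (as defined via the Golay code construction) is an even lattice: (x,x) ∈ 2ℤ for all x ∈ Λ. -/
lemma zmod2_add_val : ∀ a b : ZMod 2,
    (((a + b).val : ℤ)) = (a.val : ℤ) + b.val - 2 * (a * b).val := by decide

lemma zmod2_sq_val : ∀ a : ZMod 2, ((a.val : ℤ)) * a.val = a.val := by decide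

theorem gen_orth : ∀ i j : Fin 12, ∑ k, golayGenMatrix i k * golayGenMatrix j k = 0 := by
  decide

theorem gen_wt : ∀ i : Fin 12, (∑ k, (golayGenMatrix i k).val) % 4 = 0 := by decide

theorem golay_orth : ∀ c ∈ golayCode, ∀ c' ∈ golayCode, ∑ i, c i * c' i = 0 := by
  intro c hc
  induction hc using Submodule.span_induction with
  | mem x hx =>
    obtain ⟨i, rfl⟩ := hx
    intro c' hc'
    induction hc' using Submodule.span_induction with
    | mem y hy =>
      obtain ⟨j, rfl⟩ := hy
      exact gen_orth i j
    | zero => simp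
    | add y z _ _ hy hz => simp [mul_add, Finset.sum_add_distrib, hy, hz]
    | smul a y _ hy =>
      simp only [Pi.smul_apply, smul_eq_mul, mul_left_comm, ← Finset.mul_sum, hy, mul_zero]
  | zero => intro c' _; simp
  | add x y _ _ hx hy =>
    intro c' hc'
    simp [add_mul, Finset.sum_add_distrib, hx c' hc', hy c' hc']
  | smul a x _ hx =>
    intro c' hc'
    simp only [Pi.smul_apply, smul_eq_mul, mul_assoc, ← Finset.mul_sum, hx c' hc', mul_zero]

set_option maxHeartbeats 1000000 in
theorem golay_wt : ∀ c ∈ golayCode, (∑ i, ((c i).val : ℤ)) % 4 = 0 := by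
  intro c hc
  induction hc using Submodule.span_induction with
  | mem x hx =>
    obtain ⟨i, rfl⟩ := hx
    have := gen_wt i
    have hcast : (∑ k, ((golayGenMatrix i k).val : ℤ)) = ((∑ k, (golayGenMatrix i k).val : ℕ) : ℤ) := by
      push_cast; ring
    rw [hcast]
    omega
  | zero => simp
  | add x y hx hy hx4 hy4 =>
    have horth : ∑ i, x i * y i = 0 := golay_orth x hx y hy
    have hpar : (2 : ℤ) ∣ ∑ i, ((x i * y i).val : ℤ) := by
      have h0 : ((∑ i, (x i * y i).val : ℕ) : ZMod 2) = 0 := by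
        push_cast [ZMod.natCast_val, ZMod.cast_id]
        exact horth
      have h2 : (2 : ℕ) ∣ ∑ i, (x i * y i).val :=
        (ZMod.natCast_eq_zero_iff _ 2).mp h0
      have h3 : (2 : ℤ) ∣ ((∑ i, (x i * y i).val : ℕ) : ℤ) := Int.natCast_dvd_natCast.mpr h2
      rwa [Nat.cast_sum] at h3
    have hsum : (∑ i, (((x + y) i).val : ℤ))
        = (∑ i, ((x i).val : ℤ)) + (∑ i, ((y i).val : ℤ)) - 2 * ∑ i, ((x i * y i).val : ℤ) := by
      rw [Finset.mul_sum, ← Finset.sum_add_distrib, ← Finset.sum_sub_distrib]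
      exact Finset.sum_congr rfl fun i _ => by
        simpa using zmod2_add_val (x i) (y i)
    obtain ⟨t, ht⟩ := hpar
    rw [hsum, ht]
    omega
  | smul a x hx hx4 =>
    fin_cases a
    · show (∑ i, ((((0 : ZMod 2) • x) i).val : ℤ)) % 4 = 0
      simp
    · show (∑ i, ((((1 : ZMod 2) • x) i).val : ℤ)) % 4 = 0
      rw [one_smul]; exact hx4

/-- The Leech lattice is even: `(x,x) = (1/8)∑ xᵢ² ∈ 2ℤ` for every lattice vector. -/
theorem stmt9 (w : Fin 24 → ℝ) (hw : w ∈ leechLattice) :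
    ∃ m : ℤ, (1 / 8) * ∑ i, w i * w i = 2 * (m : ℝ) := by
  obtain ⟨c, hc, x, hcase⟩ := hw
  have hW : (∑ i, ((c i).val : ℤ)) % 4 = 0 := golay_wt c hc
  rcases hcase with ⟨hS, rfl⟩ | ⟨hS, rfl⟩
  · have hsum : ∑ i, (2 * ((c i).val : ℝ) + 4 * (x i : ℝ)) * (2 * ((c i).val : ℝ) + 4 * (x i : ℝ))
        = ((4 * (∑ i, ((c i).val : ℤ)) + 16 * (∑ i, ((c i).val : ℤ) * x i)
            + 16 * (∑ i, x i * x i) : ℤ) : ℝ) := by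
      have hterm : ∀ i : Fin 24,
          (2 * ((c i).val : ℝ) + 4 * (x i : ℝ)) * (2 * ((c i).val : ℝ) + 4 * (x i : ℝ))
            = ((4 * ((c i).val : ℤ) + 16 * ((c i).val : ℤ) * x i + 16 * (x i * x i) : ℤ) : ℝ) := by
        intro i
        have h2 : (((c i).val : ℝ)) * ((c i).val : ℝ) = ((c i).val : ℝ) := by
          exact_mod_cast congrArg (fun z : ℤ => (z : ℝ)) (zmod2_sq_val (c i))
        push_cast
        nlinarith [h2]
      rw [Finset.sum_congr rfl fun i _ => hterm i]
      push_cast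
      rw [Finset.mul_sum, Finset.mul_sum, Finset.mul_sum, ← Finset.sum_add_distrib,
        ← Finset.sum_add_distrib]
      exact Finset.sum_congr rfl fun i _ => by ring
    refine ⟨(∑ i, ((c i).val : ℤ)) / 4 + (∑ i, ((c i).val : ℤ) * x i) + (∑ i, x i * x i), ?_⟩
    rw [show (∑ i, (fun i => 2 * ((c i).val : ℝ) + 4 * (x i : ℝ)) i
        * (fun i => 2 * ((c i).val : ℝ) + 4 * (x i : ℝ)) i)
        = ∑ i, (2 * ((c i).val : ℝ) + 4 * (x i : ℝ)) * (2 * ((c i).val : ℝ) + 4 * (x i : ℝ))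
        from rfl, hsum]
    have h16 : (4 * (∑ i, ((c i).val : ℤ)) + 16 * (∑ i, ((c i).val : ℤ) * x i)
        + 16 * (∑ i, x i * x i) : ℤ)
        = 16 * ((∑ i, ((c i).val : ℤ)) / 4 + (∑ i, ((c i).val : ℤ) * x i)
            + (∑ i, x i * x i)) := by omega
    rw [h16]; push_cast; ring
  · have hsum : ∑ i, ((1 : ℝ) + 2 * ((c i).val : ℝ) + 4 * (x i : ℝ))
        * (1 + 2 * ((c i).val : ℝ) + 4 * (x i : ℝ))
        = ((24 + 8 * (∑ i, ((c i).val : ℤ)) + 8 * (∑ i, x i)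
            + 16 * (∑ i, ((c i).val : ℤ) * x i) + 16 * (∑ i, x i * x i) : ℤ) : ℝ) := by
      have hterm : ∀ i : Fin 24,
          ((1 : ℝ) + 2 * ((c i).val : ℝ) + 4 * (x i : ℝ))
            * (1 + 2 * ((c i).val : ℝ) + 4 * (x i : ℝ))
            = ((1 + 8 * ((c i).val : ℤ) + 8 * x i + 16 * ((c i).val : ℤ) * x i
                + 16 * (x i * x i) : ℤ) : ℝ) := by
        intro i
        have h2 : (((c i).val : ℝ)) * ((c i).val : ℝ) = ((c i).val : ℝ) := by
          exact_mod_cast congrArg (fun z : ℤ => (z : ℝ)) (zmod2_sq_val (c i))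
        push_cast
        nlinarith [h2]
      have hint : (∑ i, (1 + 8 * ((c i).val : ℤ) + 8 * x i + 16 * ((c i).val : ℤ) * x i
          + 16 * (x i * x i)) : ℤ)
          = 24 + 8 * (∑ i, ((c i).val : ℤ)) + 8 * (∑ i, x i)
            + 16 * (∑ i, ((c i).val : ℤ) * x i) + 16 * (∑ i, x i * x i) := by
        simp [Finset.sum_add_distrib, ← Finset.mul_sum, Finset.sum_const, mul_assoc]
      rw [Finset.sum_congr rfl fun i _ => hterm i, ← Int.cast_sum, hint]
    refine ⟨(3 + (∑ i, ((c i).val : ℤ)) + (∑ i, x i)) / 2 + (∑ i, ((c i).val : ℤ) * x i)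
        + (∑ i, x i * x i), ?_⟩
    rw [show (∑ i, (fun i => (1 : ℝ) + 2 * ((c i).val : ℝ) + 4 * (x i : ℝ)) i
        * (fun i => (1 : ℝ) + 2 * ((c i).val : ℝ) + 4 * (x i : ℝ)) i)
        = ∑ i, ((1 : ℝ) + 2 * ((c i).val : ℝ) + 4 * (x i : ℝ))
            * (1 + 2 * ((c i).val : ℝ) + 4 * (x i : ℝ))
        from rfl, hsum]
    have h16 : (24 + 8 * (∑ i, ((c i).val : ℤ)) + 8 * (∑ i, x i)
        + 16 * (∑ i, ((c i).val : ℤ) * x i) + 16 * (∑ i, x i * x i) : ℤ)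
        = 16 * ((3 + (∑ i, ((c i).val : ℤ)) + (∑ i, x i)) / 2
            + (∑ i, ((c i).val : ℤ) * x i) + (∑ i, x i * x i)) := by omega
    rw [h16]; push_cast; ring
end

section
/- Every nonzero codeword of the binary Golay code (generated by the given 24×12 generator matrix) has Hamming weight at least 8; equivalently, the minimum distance of the Golay code is 8. -/
def rowsN : Fin 12 → ℕ
  | 0 => 12369921
  | 1 => 7966722
  | 2 => 14888964
  | 3 => 14049288
  | 4 => 13230096
  | 5 => 9687072
  | 6 => 3584064
  | 7 => 7106688
  | 8 => 13537536
  | 9 => 10301952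
  | 10 => 3892224
  | 11 => 6801408

def eb (r : ℕ) : Fin 24 → ZMod 2 := fun j => if r.testBit j.val then 1 else 0

def xf : (m : ℕ) → (Fin m → ℕ) → ℕ
  | 0, _ => 0
  | m + 1, v => v 0 ^^^ xf m (fun i => v i.succ)

lemma eb_xor (a b : ℕ) : eb (a ^^^ b) = eb a + eb b := by
  funext j
  simp only [eb, Nat.testBit_xor, Pi.add_apply]
  cases a.testBit j.val <;> cases b.testBit j.val <;> simp <;> decide

lemma sum_eb : ∀ (m : ℕ) (v : Fin m → ℕ), ∑ i, eb (v i) = eb (xf m v)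
  | 0, v => by
    simp only [Finset.univ_eq_empty, Finset.sum_empty, xf]
    funext j; simp [eb]
  | m + 1, v => by
    rw [Fin.sum_univ_succ, sum_eb m (fun i => v i.succ), xf, eb_xor]

def fb (n : ℕ) : Fin 12 → ZMod 2 := fun i => if n.testBit i.val then 1 else 0

def g (i : Fin 12) (j : Fin 24) : ZMod 2 := if (rowsN i).testBit j.val then 1 else 0

def enc (n : ℕ) : ℕ := xf 12 (fun i => if n.testBit i.val then rowsN i else 0)

lemma combo_eq (n : ℕ) : ∑ i : Fin 12, fb n i • g i = eb (enc n) := by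
  rw [enc, ← sum_eb]
  refine Finset.sum_congr rfl fun i _ => ?_
  funext j
  simp only [fb, Pi.smul_apply]
  cases h : n.testBit i.val <;> simp [eb, g]

lemma exists_nat : ∀ (m : ℕ) (f : Fin m → ZMod 2),
    ∃ n, n < 2 ^ m ∧ ∀ i, f i = if n.testBit i.val then 1 else 0
  | 0, f => ⟨0, by norm_num, fun i => i.elim0⟩
  | m + 1, f => by
    obtain ⟨n', hlt, hbits⟩ := exists_nat m (fun i => f i.succ)
    have h2 : ∀ x : ZMod 2, x = 0 ∨ x = 1 := by decide
    refine ⟨(f 0).val + 2 * n', ?_, ?_⟩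
    · have h1 : (f 0).val < 2 := ZMod.val_lt (f 0)
      have h3 : (2:ℕ) ^ (m+1) = 2 * 2 ^ m := by ring
      omega
    · intro i
      refine Fin.cases ?_ ?_ i
      · rcases h2 (f 0) with h | h <;>
          simp [h, Nat.testBit_zero, Nat.add_mul_mod_self_left, ZMod.val_one]
      · intro i
        have hval : (f 0).val < 2 := ZMod.val_lt (f 0)
        have hdiv : ((f 0).val + 2 * n') / 2 = n' := by omega
        have h := hbits i
        have : ((f 0).val + 2 * n').testBit i.succ.val = n'.testBit i.val := by
          rw [Fin.val_succ, Nat.testBit_succ, hdiv]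
        rw [this]; exact h

/-- weight of the lowest `m` bits -/
def wtAux : ℕ → ℕ → ℕ
  | 0, _ => 0
  | m + 1, r => r % 2 + wtAux m (r / 2)

lemma card_filter_testBit : ∀ (m r : ℕ),
    ((Finset.univ : Finset (Fin m)).filter fun j => r.testBit j.val).card = wtAux m r
  | 0, r => by simp [wtAux]
  | m + 1, r => by
    rw [Finset.card_filter, Fin.sum_univ_succ, wtAux]
    have h0 : (if r.testBit (0 : Fin (m+1)).val then 1 else 0) = r % 2 := by
      rcases Nat.mod_two_eq_zero_or_one r with h | h <;>
        simp [Nat.testBit_zero, h]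
    have h1 : ∀ i : Fin m, r.testBit i.succ.val = (r / 2).testBit i.val := by
      intro i; rw [Fin.val_succ, Nat.testBit_succ]
    simp only [h0, h1]
    rw [← Finset.card_filter, card_filter_testBit m (r / 2)]

set_option maxHeartbeats 8000000 in
set_option maxRecDepth 10000 in
theorem key : ∀ p : Fin 64, ∀ q : Fin 64, p.val * 64 + q.val ≠ 0 →
    8 ≤ wtAux 24 (enc (p.val * 64 + q.val)) := by
  decide

lemma gen_eq_g : ∀ i, golayGenMatrix i = g i := by
  have h : ∀ i j, golayGenMatrix i j = g i j := by intro i; fin_cases i <;> decide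
  exact fun i => funext (h i)

/-- Every nonzero codeword of the binary Golay code has Hamming weight at least 8. -/
theorem stmt10 (c : Fin 24 → ZMod 2) (hc : c ∈ golayCode) (hc0 : c ≠ 0) :
    8 ≤ (Finset.univ.filter fun i => c i ≠ 0).card := by
  rw [golayCode, Submodule.mem_span_range_iff_exists_fun] at hc
  obtain ⟨f, hf⟩ := hc
  obtain ⟨n, hn, hbits⟩ := exists_nat 12 f
  have hfb : f = fb n := funext fun i => hbits i
  have hce : c = eb (enc n) := by
    rw [← hf, hfb]
    simp only [gen_eq_g]
    exact combo_eq n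
  have hwt : (Finset.univ.filter fun i => c i ≠ 0).card = wtAux 24 (enc n) := by
    rw [← card_filter_testBit 24 (enc n)]
    congr 1
    apply Finset.filter_congr
    intro j _
    rw [hce]
    simp only [eb]
    cases h : (enc n).testBit j.val <;> simp
  have hn0 : n ≠ 0 := by
    intro h
    apply hc0
    rw [hce, h]
    decide
  have hlt : n < 4096 := by norm_num at hn; omega
  have hdq : n = (n / 64) * 64 + n % 64 := by omega
  have := key ⟨n / 64, by omega⟩ ⟨n % 64, by omega⟩ (by simp only []; omega)
  rw [hwt, hdq]
  exact this
end
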